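/- If (F,G,L) is a complete hereditary cotorsion triplet in an abelian category C, then (F,L) is an admissible balanced pair in C. -/

import Mathlib

open CategoryTheory Limits

namespace Paper

universe w v u

variable {C : Type u} [Category.{v} C] [Abelian C]

section ExtDefs
variable [HasExt.{w} C]

/-- The right `Ext^1`-orthogonal class. -/
def rightPerp1 (F : Set C) : Set C :=
  {B | ∀ A ∈ F, Subsingleton (Abelian.Ext A B 1)}

/-- The left `Ext^1`-orthogonal class. -/
def leftPerp1 (L : Set C) : Set C :=
  {A | ∀ B ∈ L, Subsingleton (Abelian.Ext A B 1)}

/-- The right `Ext^{>0}`-orthogonal class. -/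
def rightPerp (F : Set C) : Set C :=
  {B | ∀ A ∈ F, ∀ n : ℕ, 0 < n → Subsingleton (Abelian.Ext A B n)}

/-- The left `Ext^{>0}`-orthogonal class. -/
def leftPerp (L : Set C) : Set C :=
  {A | ∀ B ∈ L, ∀ n : ℕ, 0 < n → Subsingleton (Abelian.Ext A B n)}

/-- `(Y, X)` is a cotorsion pair: each class is the `Ext^1`-orthogonal of the other. -/
structure IsCotorsionPair (Y X : Set C) : Prop where
  mem_left_iff : ∀ A : C, A ∈ Y ↔ ∀ B ∈ X, Subsingleton (Abelian.Ext A B 1)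
  mem_right_iff : ∀ B : C, B ∈ X ↔ ∀ A ∈ Y, Subsingleton (Abelian.Ext A B 1)

/-- Hereditary: `Ext^i(Y, X) = 0` for all `i > 0`. -/
def Hereditary (Y X : Set C) : Prop :=
  ∀ A ∈ Y, ∀ B ∈ X, ∀ n : ℕ, 0 < n → Subsingleton (Abelian.Ext A B n)

end ExtDefs

/-- There exists a short exact sequence `0 ⟶ A ⟶ B ⟶ X ⟶ 0`. -/
def SES (A B X : C) : Prop :=
  ∃ (f : A ⟶ B) (g : B ⟶ X) (w : f ≫ g = 0), (ShortComplex.mk f g w).ShortExact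

/-- Completeness of a pair of classes: every object admits the two approximation
short exact sequences. -/
def Complete (Y X : Set C) : Prop :=
  ∀ M : C, (∃ B ∈ X, ∃ A ∈ Y, SES B A M) ∧ (∃ B ∈ X, ∃ A ∈ Y, SES M B A)

/-- A class is resolving if it contains the projectives and is closed under
extensions and under kernels of epimorphisms between its objects. -/
def Resolving (Y : Set C) : Prop :=
  (∀ P : C, Projective P → P ∈ Y) ∧
  (∀ A E B : C, SES A E B → A ∈ Y → B ∈ Y → E ∈ Y) ∧
  (∀ A E B : C, SES A E B → E ∈ Y → B ∈ Y → A ∈ Y)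

/-- A class is coresolving if it contains the injectives and is closed under
extensions and under cokernels of monomorphisms between its objects. -/
def Coresolving (X : Set C) : Prop :=
  (∀ I : C, Injective I → I ∈ X) ∧
  (∀ A E B : C, SES A E B → A ∈ X → B ∈ X → E ∈ X) ∧
  (∀ A E B : C, SES A E B → A ∈ X → E ∈ X → B ∈ X)

/-- `φ : F₀ ⟶ M` is an `F`-precover of `M`. -/
def IsPrecover (F : Set C) {F₀ M : C} (φ : F₀ ⟶ M) : Prop :=
  F₀ ∈ F ∧ ∀ F' ∈ F, ∀ g : F' ⟶ M, ∃ h : F' ⟶ F₀, h ≫ φ = g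

/-- `ψ : M ⟶ L₀` is an `L`-preenvelope of `M`. -/
def IsPreenvelope (L : Set C) {M L₀ : C} (ψ : M ⟶ L₀) : Prop :=
  L₀ ∈ L ∧ ∀ L' ∈ L, ∀ g : M ⟶ L', ∃ h : L₀ ⟶ L', ψ ≫ h = g

/-- `F` is a precovering class. -/
def Precovering (F : Set C) : Prop :=
  ∀ M : C, ∃ (F₀ : C) (φ : F₀ ⟶ M), IsPrecover F φ

/-- `L` is a preenveloping class. -/
def Preenveloping (L : Set C) : Prop :=
  ∀ M : C, ∃ (L₀ : C) (ψ : M ⟶ L₀), IsPreenvelope L ψ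

/-- `F` is special precovering: every object has an epic `F`-precover with
kernel in `F^{⊥₁}`. -/
def SpecialPrecovering [HasExt.{w} C] (F : Set C) : Prop :=
  ∀ M : C, ∃ (F₀ : C) (φ : F₀ ⟶ M), IsPrecover F φ ∧ Epi φ ∧
    kernel φ ∈ rightPerp1.{w} F

/-- `L` is special preenveloping: every object has a monic `L`-preenvelope with
cokernel in `^{⊥₁}L`. -/
def SpecialPreenveloping [HasExt.{w} C] (L : Set C) : Prop :=
  ∀ M : C, ∃ (L₀ : C) (ψ : M ⟶ L₀), IsPreenvelope L ψ ∧ Mono ψ ∧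
    cokernel ψ ∈ leftPerp1.{w} L

/-- The class of direct summands of objects of `F`. -/
def Smd (F : Set C) : Set C :=
  {A | ∃ B ∈ F, ∃ (i : A ⟶ B) (r : B ⟶ A), i ≫ r = 𝟙 A}

/-- Data of a (not necessarily exact) resolution `⋯ ⟶ F₁ ⟶ F₀ ⟶ M ⟶ 0`. -/
structure Resolution (M : C) where
  obj : ℕ → C
  d : ∀ n : ℕ, obj (n + 1) ⟶ obj n
  ε : obj 0 ⟶ M
  d_comp_d : ∀ n : ℕ, d (n + 1) ≫ d n = 0
  d_comp_ε : d 0 ≫ ε = 0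

namespace Resolution

variable {M : C} (R : Resolution M)

/-- All objects of the resolution lie in `S`. -/
def ObjsIn (S : Set C) : Prop := ∀ n : ℕ, R.obj n ∈ S

/-- The resolution becomes exact after applying `Hom(X, -)`. -/
def HomLeftAcyclic (X : C) : Prop :=
  (∀ g : X ⟶ M, ∃ h : X ⟶ R.obj 0, h ≫ R.ε = g) ∧
  (∀ h : X ⟶ R.obj 0, h ≫ R.ε = 0 → ∃ k : X ⟶ R.obj 1, k ≫ R.d 0 = h) ∧
  (∀ (n : ℕ) (h : X ⟶ R.obj (n + 1)), h ≫ R.d n = 0 →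
    ∃ k : X ⟶ R.obj (n + 2), k ≫ R.d (n + 1) = h)

/-- The resolution becomes exact after applying `Hom(-, L')`. -/
def HomRightAcyclic (L' : C) : Prop :=
  (∀ g : M ⟶ L', R.ε ≫ g = 0 → g = 0) ∧
  (∀ g : R.obj 0 ⟶ L', R.d 0 ≫ g = 0 → ∃ k : M ⟶ L', R.ε ≫ k = g) ∧
  (∀ (n : ℕ) (g : R.obj (n + 1) ⟶ L'), R.d (n + 1) ≫ g = 0 →
    ∃ k : R.obj n ⟶ L', R.d n ≫ k = g)

end Resolution

/-- Data of a (not necessarily exact) coresolution `0 ⟶ M ⟶ L⁰ ⟶ L¹ ⟶ ⋯`. -/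
structure Coresolution (M : C) where
  obj : ℕ → C
  d : ∀ n : ℕ, obj n ⟶ obj (n + 1)
  η : M ⟶ obj 0
  d_comp_d : ∀ n : ℕ, d n ≫ d (n + 1) = 0
  η_comp_d : η ≫ d 0 = 0

namespace Coresolution

variable {M : C} (R : Coresolution M)

/-- All objects of the coresolution lie in `S`. -/
def ObjsIn (S : Set C) : Prop := ∀ n : ℕ, R.obj n ∈ S

/-- The coresolution becomes exact after applying `Hom(X, -)`. -/
def HomLeftAcyclic (X : C) : Prop :=
  (∀ g : X ⟶ M, g ≫ R.η = 0 → g = 0) ∧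
  (∀ g : X ⟶ R.obj 0, g ≫ R.d 0 = 0 → ∃ k : X ⟶ M, k ≫ R.η = g) ∧
  (∀ (n : ℕ) (g : X ⟶ R.obj (n + 1)), g ≫ R.d (n + 1) = 0 →
    ∃ k : X ⟶ R.obj n, k ≫ R.d n = g)

/-- The coresolution becomes exact after applying `Hom(-, L')`. -/
def HomRightAcyclic (L' : C) : Prop :=
  (∀ g : M ⟶ L', ∃ h : R.obj 0 ⟶ L', R.η ≫ h = g) ∧
  (∀ h : R.obj 0 ⟶ L', R.η ≫ h = 0 → ∃ k : R.obj 1 ⟶ L', R.d 0 ≫ k = h) ∧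
  (∀ (n : ℕ) (h : R.obj (n + 1) ⟶ L'), R.d n ≫ h = 0 →
    ∃ k : R.obj (n + 2) ⟶ L', R.d (n + 1) ≫ k = h)

end Coresolution

/-- `(F, L)` is a balanced pair: `F` is precovering, `L` is preenveloping, every object
has a `Hom(-, L)`-acyclic `F`-resolution and a `Hom(F, -)`-acyclic `L`-coresolution. -/
def BalancedPair (F L : Set C) : Prop :=
  Precovering F ∧ Preenveloping L ∧
  (∀ M : C, ∃ R : Resolution M, R.ObjsIn F ∧
    (∀ X ∈ F, R.HomLeftAcyclic X) ∧ (∀ Y ∈ L, R.HomRightAcyclic Y)) ∧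
  (∀ M : C, ∃ R : Coresolution M, R.ObjsIn L ∧
    (∀ X ∈ F, R.HomLeftAcyclic X) ∧ (∀ Y ∈ L, R.HomRightAcyclic Y))

/-- Admissible: every `F`-precover is epic and every `L`-preenvelope is monic. -/
def Admissible (F L : Set C) : Prop :=
  (∀ (F₀ M : C) (φ : F₀ ⟶ M), IsPrecover F φ → Epi φ) ∧
  (∀ (M L₀ : C) (ψ : M ⟶ L₀), IsPreenvelope L ψ → Mono ψ)

universe w'

section ToHom

open Abelian DerivedCategory

variable (C) in
/-- `H⁰` of the single complex, naturally isomorphic to the identity. -/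
noncomputable def natH [HasDerivedCategory.{w'} C] :
    DerivedCategory.singleFunctor C 0 ⋙ DerivedCategory.homologyFunctor C 0 ≅ 𝟭 C :=
  Functor.isoWhiskerRight ((SingleFunctors.evaluation _ _ (0 : ℤ)).mapIso
      (DerivedCategory.singleFunctorsPostcompQIso C)) (DerivedCategory.homologyFunctor C 0) ≪≫
    Functor.associator _ _ _ ≪≫
    Functor.isoWhiskerLeft (HomologicalComplex.single C (ComplexShape.up ℤ) 0)
      (DerivedCategory.homologyFunctorFactors C 0) ≪≫
    HomologicalComplex.homologyFunctorSingleIso C (ComplexShape.up ℤ) 0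

variable [HasExt.{w} C]

/-- Convert an element of `Ext X Y 0` into an actual morphism. -/
noncomputable def toHom {X Y : C} (x : Ext X Y 0) : X ⟶ Y :=
  letI := HasDerivedCategory.standard C
  ((natH C).app X).inv ≫ (DerivedCategory.homologyFunctor C 0).map
      ((ShiftedHom.homEquiv (C := DerivedCategory C) ((0 : ℕ) : ℤ)
        Nat.cast_zero).symm x.hom) ≫ ((natH C).app Y).hom

lemma toHom_mk₀ {X Y : C} (f : X ⟶ Y) : toHom (Ext.mk₀ f) = f := by
  letI := HasDerivedCategory.standard C
  dsimp only [toHom]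
  have h1 : ((ShiftedHom.homEquiv (C := DerivedCategory C)
      ((0 : ℕ) : ℤ) Nat.cast_zero).symm (Ext.mk₀ f).hom) =
      (DerivedCategory.singleFunctor C 0).map f := by
    rw [Ext.mk₀_hom]
    exact (ShiftedHom.homEquiv (C := DerivedCategory C) ((0 : ℕ) : ℤ)
      Nat.cast_zero).symm_apply_apply ((DerivedCategory.singleFunctor C 0).map f)
  rw [h1]
  have h2 := (natH C).hom.naturality f
  simp only [Functor.comp_map, Functor.id_map] at h2
  simp only [Iso.app_hom, Iso.app_inv]
  rw [h2]
  simp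

lemma toHom_comp {X Y Z : C} (x : Ext X Y 0) (y : Ext Y Z 0) (h : 0 + 0 = 0) :
    toHom (x.comp y h) = toHom x ≫ toHom y := by
  letI := HasDerivedCategory.standard C
  dsimp only [toHom]
  have h3 : ((ShiftedHom.homEquiv (C := DerivedCategory C) ((0 : ℕ) : ℤ)
        Nat.cast_zero).symm (x.comp y h).hom) =
      ((ShiftedHom.homEquiv (C := DerivedCategory C) ((0 : ℕ) : ℤ)
        Nat.cast_zero).symm x.hom) ≫
      ((ShiftedHom.homEquiv (C := DerivedCategory C) ((0 : ℕ) : ℤ)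
        Nat.cast_zero).symm y.hom) := by
    have hx := (ShiftedHom.homEquiv (C := DerivedCategory C) ((0 : ℕ) : ℤ)
        Nat.cast_zero).apply_symm_apply x.hom
    have hy := (ShiftedHom.homEquiv (C := DerivedCategory C) ((0 : ℕ) : ℤ)
        Nat.cast_zero).apply_symm_apply y.hom
    rw [ShiftedHom.homEquiv_apply] at hx hy
    have h2 : (x.comp y h).hom = ShiftedHom.mk₀ _ Nat.cast_zero
        (((ShiftedHom.homEquiv (C := DerivedCategory C) ((0 : ℕ) : ℤ)
          Nat.cast_zero).symm x.hom) ≫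
         ((ShiftedHom.homEquiv (C := DerivedCategory C) ((0 : ℕ) : ℤ)
          Nat.cast_zero).symm y.hom)) := by
      rw [Ext.comp_hom]
      conv_lhs => rw [← hx, ← hy]
      rw [ShiftedHom.mk₀_comp_mk₀]
    rw [h2, ← ShiftedHom.homEquiv_apply]
    exact (ShiftedHom.homEquiv (C := DerivedCategory C) ((0 : ℕ) : ℤ)
      Nat.cast_zero).symm_apply_apply _
  rw [h3, Functor.map_comp]
  simp

end ToHom


section ExtLemmas

open Abelian

variable [HasExt.{w} C]

lemma lift_of_ext {S : ShortComplex C} (hS : S.ShortExact) {X : C}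
    (hX : Subsingleton (Ext X S.X₁ 1)) (g : X ⟶ S.X₃) :
    ∃ h : X ⟶ S.X₂, h ≫ S.g = g := by
  obtain ⟨x₂, hx₂⟩ := Ext.covariant_sequence_exact₃ X hS (Ext.mk₀ g) (zero_add 1)
    (Subsingleton.elim _ 0)
  refine ⟨toHom x₂, ?_⟩
  have h2 := congrArg toHom hx₂
  rwa [toHom_comp, toHom_mk₀, toHom_mk₀] at h2

lemma extend_of_ext {S : ShortComplex C} (hS : S.ShortExact) {Y : C}
    (hY : Subsingleton (Ext S.X₃ Y 1)) (g : S.X₁ ⟶ Y) :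
    ∃ h : S.X₂ ⟶ Y, S.f ≫ h = g := by
  obtain ⟨x₂, hx₂⟩ := Ext.contravariant_sequence_exact₁ hS Y (Ext.mk₀ g)
    (n₁ := 1) (by omega) (Subsingleton.elim _ 0)
  refine ⟨toHom x₂, ?_⟩
  have h2 := congrArg toHom hx₂
  rwa [toHom_comp, toHom_mk₀, toHom_mk₀] at h2

lemma extend_of_ext₂ {K F₀ M G' F' Y : C} {f : K ⟶ F₀} {g : F₀ ⟶ M} {w : f ≫ g = 0}
    (hS : (ShortComplex.mk f g w).ShortExact)
    {f' : M ⟶ G'} {g' : G' ⟶ F'} {w' : f' ≫ g' = 0}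
    (hT : (ShortComplex.mk f' g' w').ShortExact)
    (h1 : Subsingleton (Ext G' Y 1)) (h2 : Subsingleton (Ext F' K 2)) (u : K ⟶ Y) :
    ∃ h : F₀ ⟶ Y, f ≫ h = u := by
  have hzero : hT.extClass.comp (hS.extClass.comp (Ext.mk₀ u) (add_zero 1))
      (show (1:ℕ) + 1 = 2 from rfl) = 0 := by
    rw [← Ext.comp_assoc_of_third_deg_zero hT.extClass hS.extClass (Ext.mk₀ u)
      (show (1:ℕ) + 1 = 2 from rfl),
      Subsingleton.elim (hT.extClass.comp hS.extClass (show (1:ℕ) + 1 = 2 from rfl)) 0,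
      Ext.zero_comp]
  obtain ⟨x₂, hx₂⟩ := Ext.contravariant_sequence_exact₁ hT Y
    (hS.extClass.comp (Ext.mk₀ u) (add_zero 1)) (n₁ := 2) (by omega) hzero
  have hobs : hS.extClass.comp (Ext.mk₀ u) (add_zero 1) = 0 := by
    rw [← hx₂, Subsingleton.elim x₂ 0, Ext.comp_zero]
  obtain ⟨x₃, hx₃⟩ := Ext.contravariant_sequence_exact₁ hS Y (Ext.mk₀ u) (n₁ := 1) (by omega) hobs
  refine ⟨toHom x₃, ?_⟩
  have h3 := congrArg toHom hx₃
  rwa [toHom_comp, toHom_mk₀, toHom_mk₀] at h3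

lemma lift_of_ext₂ {B G' M L₀ C₀ X : C} {f : M ⟶ L₀} {g : L₀ ⟶ C₀} {w : f ≫ g = 0}
    (hS : (ShortComplex.mk f g w).ShortExact)
    {f' : B ⟶ G'} {g' : G' ⟶ M} {w' : f' ≫ g' = 0}
    (hT : (ShortComplex.mk f' g' w').ShortExact)
    (h1 : Subsingleton (Ext X G' 1)) (h2 : Subsingleton (Ext C₀ B 2)) (u : X ⟶ C₀) :
    ∃ h : X ⟶ L₀, h ≫ g = u := by
  have hzero : ((Ext.mk₀ u).comp hS.extClass (zero_add 1)).comp hT.extClass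
      (show (1:ℕ) + 1 = 2 from rfl) = 0 := by
    rw [Ext.comp_assoc (Ext.mk₀ u) hS.extClass hT.extClass (zero_add 1)
      (show (1:ℕ) + 1 = 2 from rfl) (show (0:ℕ) + 1 + 1 = 2 by omega),
      Subsingleton.elim (hS.extClass.comp hT.extClass (show (1:ℕ) + 1 = 2 from rfl)) 0,
      Ext.comp_zero]
  obtain ⟨x₂, hx₂⟩ := Ext.covariant_sequence_exact₃ X hT
    ((Ext.mk₀ u).comp hS.extClass (zero_add 1)) rfl hzero
  have hobs : (Ext.mk₀ u).comp hS.extClass (zero_add 1) = 0 := by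
    rw [← hx₂, Subsingleton.elim x₂ 0, Ext.zero_comp]
  obtain ⟨x₃, hx₃⟩ := Ext.covariant_sequence_exact₃ X hS (Ext.mk₀ u) (zero_add 1) hobs
  refine ⟨toHom x₃, ?_⟩
  have h3 := congrArg toHom hx₃
  rwa [toHom_comp, toHom_mk₀, toHom_mk₀] at h3

end ExtLemmas



section Constructions

/-- Data of a special approximation sequence `0 ⟶ B ⟶ A ⟶ M ⟶ 0`. -/
structure ApproxData (F G : Set C) (M : C) where
  B : C
  A : C
  f : B ⟶ A
  g : A ⟶ M
  w : f ≫ g = 0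
  hB : B ∈ G
  hA : A ∈ F
  ex : (ShortComplex.mk f g w).ShortExact

/-- Data of a special coapproximation sequence `0 ⟶ M ⟶ B ⟶ A ⟶ 0`. -/
structure CoapproxData (G L : Set C) (M : C) where
  B : C
  A : C
  f : M ⟶ B
  g : B ⟶ A
  w : f ≫ g = 0
  hB : B ∈ L
  hA : A ∈ G
  ex : (ShortComplex.mk f g w).ShortExact

noncomputable def approx {F G : Set C} (h : ∀ M : C, ∃ B ∈ G, ∃ A ∈ F, SES B A M) (M : C) :
    ApproxData F G M :=
  Classical.choice (by
    obtain ⟨B, hB, A, hA, f, g, w, ex⟩ := h M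
    exact ⟨⟨B, A, f, g, w, hB, hA, ex⟩⟩)

noncomputable def coapprox {G L : Set C} (h : ∀ M : C, ∃ B ∈ L, ∃ A ∈ G, SES M B A) (M : C) :
    CoapproxData G L M :=
  Classical.choice (by
    obtain ⟨B, hB, A, hA, f, g, w, ex⟩ := h M
    exact ⟨⟨B, A, f, g, w, hB, hA, ex⟩⟩)

end Constructions
section MainConstruction

open Abelian

variable [HasExt.{w} C]

lemma exists_good_resolution (F G L : Set C)
    (hFG : IsCotorsionPair.{w} F G) (hGL : IsCotorsionPair.{w} G L)
    (hFGc : ∀ M : C, (∃ B ∈ G, ∃ A ∈ F, SES B A M) ∧ (∃ B ∈ G, ∃ A ∈ F, SES M B A))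
    (hFGh : ∀ A ∈ F, ∀ B ∈ G, ∀ n : ℕ, 0 < n → Subsingleton (Ext A B n)) (M : C) :
    ∃ R : Resolution M, R.ObjsIn F ∧
      (∀ X ∈ F, R.HomLeftAcyclic X) ∧ (∀ Y ∈ L, R.HomRightAcyclic Y) := by
  classical
  let ap := approx (fun N => (hFGc N).1)
  let K : ℕ → C := fun n => Nat.rec (motive := fun _ => C) M (fun _ p => (ap p).B) n
  let Fo : ℕ → C := fun n => (ap (K n)).A
  let fk : ∀ n, K (n + 1) ⟶ Fo n := fun n => (ap (K n)).f
  let gk : ∀ n, Fo n ⟶ K n := fun n => (ap (K n)).g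
  have wk : ∀ n, fk n ≫ gk n = 0 := fun n => (ap (K n)).w
  have exk : ∀ n, (ShortComplex.mk (fk n) (gk n) (wk n)).ShortExact := fun n => (ap (K n)).ex
  have hKmem : ∀ n, K (n + 1) ∈ G := fun n => (ap (K n)).hB
  have hFmem : ∀ n, Fo n ∈ F := fun n => (ap (K n)).hA
  refine ⟨⟨Fo, fun n => gk (n + 1) ≫ fk n, gk 0, ?_, ?_⟩, hFmem, ?_, ?_⟩
  · intro n
    rw [Category.assoc, ← Category.assoc (fk (n + 1)), wk (n + 1), zero_comp, comp_zero]
  · rw [Category.assoc, wk 0, comp_zero]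
  · -- Hom(X, -)-acyclicity for X ∈ F
    intro X hX
    have hx : ∀ n, Subsingleton (Ext X (K (n + 1)) 1) :=
      fun n => (hFG.mem_left_iff X).1 hX _ (hKmem n)
    refine ⟨?_, ?_, ?_⟩
    · intro g
      exact lift_of_ext (exk 0) (hx 0) g
    · intro h hh
      have := (exk 0).mono_f
      obtain ⟨k, hk⟩ := lift_of_ext (exk 1) (hx 1) ((exk 0).exact.lift h hh)
      refine ⟨k, ?_⟩
      show k ≫ gk 1 ≫ fk 0 = h
      rw [← Category.assoc, hk, ShortComplex.Exact.lift_f]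
    · intro n h hh
      have := (exk (n + 1)).mono_f
      have := (exk n).mono_f
      have hh'' : (h ≫ gk (n + 1)) ≫ fk n = 0 := by
        rw [Category.assoc]; exact hh
      have hmono : h ≫ gk (n + 1) = 0 := zero_of_comp_mono (fk n) hh''
      obtain ⟨k, hk⟩ := lift_of_ext (exk (n + 2)) (hx (n + 2))
        ((exk (n + 1)).exact.lift h hmono)
      refine ⟨k, ?_⟩
      show k ≫ gk (n + 2) ≫ fk (n + 1) = h
      rw [← Category.assoc, hk, ShortComplex.Exact.lift_f]
  · -- Hom(-, Y)-acyclicity for Y ∈ L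
    intro Y hY
    have hextend : ∀ (n : ℕ) (u : K (n + 1) ⟶ Y), ∃ h : Fo n ⟶ Y, fk n ≫ h = u := by
      intro n u
      match n with
      | 0 =>
        obtain ⟨B, hB, A, hA, f', g'', w', ex'⟩ := (hFGc M).2
        exact extend_of_ext₂ (exk 0) ex' ((hGL.mem_left_iff B).1 hB Y hY)
          (hFGh A hA (K 1) (hKmem 0) 2 (by norm_num)) u
      | Nat.succ m =>
        exact extend_of_ext (exk (m + 1)) ((hGL.mem_left_iff _).1 (hKmem m) Y hY) u
    refine ⟨?_, ?_, ?_⟩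
    · intro g hg
      have := (exk 0).epi_g
      exact zero_of_epi_comp (gk 0) hg
    · intro g hg
      have := (exk 1).epi_g
      have := (exk 0).epi_g
      replace hg : (gk 1 ≫ fk 0) ≫ g = 0 := hg
      rw [Category.assoc] at hg
      have h1 : fk 0 ≫ g = 0 := zero_of_epi_comp (gk 1) hg
      exact ⟨(exk 0).exact.desc g h1, (exk 0).exact.g_desc g h1⟩
    · intro n g hg
      have := (exk (n + 2)).epi_g
      have := (exk (n + 1)).epi_g
      replace hg : (gk (n + 2) ≫ fk (n + 1)) ≫ g = 0 := hg
      rw [Category.assoc] at hg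
      have h1 : fk (n + 1) ≫ g = 0 := zero_of_epi_comp (gk (n + 2)) hg
      have hdesc := (exk (n + 1)).exact.g_desc g h1
      obtain ⟨h, hh⟩ := hextend n ((exk (n + 1)).exact.desc g h1)
      refine ⟨h, ?_⟩
      show (gk (n + 1) ≫ fk n) ≫ h = g
      rw [Category.assoc, hh, hdesc]

lemma exists_good_coresolution (F G L : Set C)
    (hFG : IsCotorsionPair.{w} F G) (hGL : IsCotorsionPair.{w} G L)
    (hGLc : ∀ M : C, (∃ B ∈ L, ∃ A ∈ G, SES B A M) ∧ (∃ B ∈ L, ∃ A ∈ G, SES M B A))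
    (hGLh : ∀ A ∈ G, ∀ B ∈ L, ∀ n : ℕ, 0 < n → Subsingleton (Ext A B n)) (M : C) :
    ∃ R : Coresolution M, R.ObjsIn L ∧
      (∀ X ∈ F, R.HomLeftAcyclic X) ∧ (∀ Y ∈ L, R.HomRightAcyclic Y) := by
  classical
  let ap := coapprox (fun N => (hGLc N).2)
  let K : ℕ → C := fun n => Nat.rec (motive := fun _ => C) M (fun _ p => (ap p).A) n
  let Lo : ℕ → C := fun n => (ap (K n)).B
  let fk : ∀ n, K n ⟶ Lo n := fun n => (ap (K n)).f
  let gk : ∀ n, Lo n ⟶ K (n + 1) := fun n => (ap (K n)).g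
  have wk : ∀ n, fk n ≫ gk n = 0 := fun n => (ap (K n)).w
  have exk : ∀ n, (ShortComplex.mk (fk n) (gk n) (wk n)).ShortExact := fun n => (ap (K n)).ex
  have hKmem : ∀ n, K (n + 1) ∈ G := fun n => (ap (K n)).hA
  have hLmem : ∀ n, Lo n ∈ L := fun n => (ap (K n)).hB
  refine ⟨⟨Lo, fun n => gk n ≫ fk (n + 1), fk 0, ?_, ?_⟩, hLmem, ?_, ?_⟩
  · intro n
    rw [Category.assoc, ← Category.assoc (fk (n + 1)), wk (n + 1), zero_comp, comp_zero]
  · rw [← Category.assoc, wk 0, zero_comp]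
  · -- Hom(X, -)-acyclicity for X ∈ F
    intro X hX
    have hlift : ∀ (n : ℕ) (u : X ⟶ K (n + 1)), ∃ h : X ⟶ Lo n, h ≫ gk n = u := by
      intro n u
      match n with
      | 0 =>
        obtain ⟨B, hB, A, hA, f', g'', w', ex'⟩ := (hGLc M).1
        exact lift_of_ext₂ (exk 0) ex' ((hFG.mem_left_iff X).1 hX A hA)
          (hGLh (K 1) (hKmem 0) B hB 2 (by norm_num)) u
      | Nat.succ m =>
        exact lift_of_ext (exk (m + 1)) ((hFG.mem_left_iff X).1 hX _ (hKmem m)) u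
    refine ⟨?_, ?_, ?_⟩
    · intro g hg
      have := (exk 0).mono_f
      exact zero_of_comp_mono (fk 0) hg
    · intro g hg
      have := (exk 1).mono_f
      have := (exk 0).mono_f
      replace hg : (g ≫ gk 0) ≫ fk 1 = 0 := by
        rw [Category.assoc]; exact hg
      have h1 : g ≫ gk 0 = 0 := zero_of_comp_mono (fk 1) hg
      exact ⟨(exk 0).exact.lift g h1, (exk 0).exact.lift_f g h1⟩
    · intro n g hg
      have := (exk (n + 2)).mono_f
      have := (exk (n + 1)).mono_f
      replace hg : (g ≫ gk (n + 1)) ≫ fk (n + 2) = 0 := by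
        rw [Category.assoc]; exact hg
      have h1 : g ≫ gk (n + 1) = 0 := zero_of_comp_mono (fk (n + 2)) hg
      have hliftf := (exk (n + 1)).exact.lift_f g h1
      obtain ⟨h, hh⟩ := hlift n ((exk (n + 1)).exact.lift g h1)
      refine ⟨h, ?_⟩
      show h ≫ gk n ≫ fk (n + 1) = g
      rw [← Category.assoc, hh, hliftf]
  · -- Hom(-, Y)-acyclicity for Y ∈ L
    intro Y hY
    have hy : ∀ n, Subsingleton (Ext (K (n + 1)) Y 1) :=
      fun n => (hGL.mem_left_iff _).1 (hKmem n) Y hY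
    refine ⟨?_, ?_, ?_⟩
    · intro g
      exact extend_of_ext (exk 0) (hy 0) g
    · intro h hh
      have := (exk 0).epi_g
      obtain ⟨k, hk⟩ := extend_of_ext (exk 1) (hy 1) ((exk 0).exact.desc h hh)
      refine ⟨k, ?_⟩
      show (gk 0 ≫ fk 1) ≫ k = h
      rw [Category.assoc, hk]
      exact (exk 0).exact.g_desc h hh
    · intro n h hh
      have := (exk (n + 1)).epi_g
      have := (exk n).epi_g
      have hepi : fk (n + 1) ≫ h = 0 := by
        have hh'' : gk n ≫ fk (n + 1) ≫ h = 0 := by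
          rw [← Category.assoc]; exact hh
        exact zero_of_epi_comp (gk n) hh''
      obtain ⟨k, hk⟩ := extend_of_ext (exk (n + 2)) (hy (n + 2))
        ((exk (n + 1)).exact.desc h hepi)
      refine ⟨k, ?_⟩
      show (gk (n + 1) ≫ fk (n + 2)) ≫ k = h
      rw [Category.assoc, hk]
      exact (exk (n + 1)).exact.g_desc h hepi

end MainConstruction

/-- A complete hereditary cotorsion triplet `(F, G, L)` gives an admissible
balanced pair `(F, L)`. -/
theorem balanced_of_complete_hereditary_cotorsion_triplet
    {C : Type u} [Category.{v} C] [Abelian C] [HasExt.{w} C]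
    (F G L : Set C)
    (hFG : IsCotorsionPair.{w} F G) (hGL : IsCotorsionPair.{w} G L)
    (hFGc : Complete F G) (hGLc : Complete G L)
    (hFGh : Hereditary.{w} F G) (hGLh : Hereditary.{w} G L) :
    BalancedPair F L ∧ Admissible F L := by
  classical
  have hFGc1 : ∀ M : C, (∃ B ∈ G, ∃ A ∈ F, SES B A M) ∧ (∃ B ∈ G, ∃ A ∈ F, SES M B A) :=
    fun M => hFGc M
  have hGLc1 : ∀ M : C, (∃ B ∈ L, ∃ A ∈ G, SES B A M) ∧ (∃ B ∈ L, ∃ A ∈ G, SES M B A) :=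
    fun M => hGLc M
  -- precovering
  have hprec : Precovering F := by
    intro M
    obtain ⟨B, hB, A, hA, f, g, w, ex⟩ := (hFGc1 M).1
    exact ⟨A, g, hA, fun F' hF' u =>
      lift_of_ext ex ((hFG.mem_left_iff F').1 hF' B hB) u⟩
  -- preenveloping
  have hpree : Preenveloping L := by
    intro M
    obtain ⟨B, hB, A, hA, f, g, w, ex⟩ := (hGLc1 M).2
    exact ⟨B, f, hB, fun L' hL' u =>
      extend_of_ext ex ((hGL.mem_left_iff A).1 hA L' hL') u⟩
  refine ⟨⟨hprec, hpree, ?_, ?_⟩, ?_, ?_⟩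
  · exact fun M => exists_good_resolution F G L hFG hGL hFGc1 hFGh M
  · exact fun M => exists_good_coresolution F G L hFG hGL hGLc1 hGLh M
  · -- precovers are epic
    intro F₀ M φ hφ
    obtain ⟨B, hB, A, hA, f, g, w, ex⟩ := (hFGc1 M).1
    obtain ⟨h, hh⟩ := hφ.2 A hA g
    have : Epi (h ≫ φ) := by
      rw [hh]
      exact ex.epi_g
    exact epi_of_epi h φ
  · -- preenvelopes are monic
    intro M L₀ ψ hψ
    obtain ⟨B, hB, A, hA, f, g, w, ex⟩ := (hGLc1 M).2
    obtain ⟨h, hh⟩ := hψ.2 B hB f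
    have : Mono (ψ ≫ h) := by
      rw [hh]
      exact ex.mono_f
    exact mono_of_mono ψ h


end Paper
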